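/- There exists a function p : ℝ × {−ω₀, ω₀} → ℝ, 2π-periodic and C^∞ in θ for each ω, odd in the sense p(−θ, −ω) = −p(θ, ω), such that Lp(θ, ω) = ∂θq(θ, ω) for all θ ∈ ℝ and ω ∈ {−ω₀, ω₀}. (Existence of a nontrivial Jordan block of L at the eigenvalue 0.) -/

import Mathlib

noncomputable section

open MeasureTheory

/-- `G u ω x = x·cos u + 2ωu`. -/
def G (u ω x : ℝ) : ℝ := x * Real.cos u + 2 * ω * u

/-- The unnormalized stationary profile `S(θ, ω, x)`. -/
def S (θ ω x : ℝ) : ℝ :=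
  Real.exp (G θ ω x) *
    ((1 - Real.exp (4 * Real.pi * ω)) * (∫ u in (0:ℝ)..θ, Real.exp (-(G u ω x))) +
      Real.exp (4 * Real.pi * ω) * (∫ u in (0:ℝ)..(2 * Real.pi), Real.exp (-(G u ω x))))

/-- The normalization constant `Z(ω, x)`. -/
def Z (ω x : ℝ) : ℝ := ∫ θ in (0:ℝ)..(2 * Real.pi), S θ ω x

/-- `Ψ_μ` for the binary disorder law `μ = (1/2)(δ_{-ω₀} + δ_{ω₀})`. -/
def psiMu (ω₀ x : ℝ) : ℝ :=
  (1 / 2) * ((∫ θ in (0:ℝ)..(2 * Real.pi), Real.cos θ * S θ (-ω₀) x) / Z (-ω₀) x +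
    (∫ θ in (0:ℝ)..(2 * Real.pi), Real.cos θ * S θ ω₀ x) / Z ω₀ x)

/-- The stationary density `q(θ, ω) = S(θ, ω, 2Kr)/Z(ω, 2Kr)`. -/
def q (K r θ ω : ℝ) : ℝ := S θ ω (2 * K * r) / Z ω (2 * K * r)

/-- `κ(ω) = (1 − exp(4πω))/(2 Z(ω, 2Kr))`. -/
def kap (K r ω : ℝ) : ℝ := (1 - Real.exp (4 * Real.pi * ω)) / (2 * Z ω (2 * K * r))

/-- The averaged convolution `⟨J∗h⟩_μ(θ)` for binary disorder. -/
def Jconv (K ω₀ : ℝ) (h : ℝ → ℝ → ℝ) (θ : ℝ) : ℝ :=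
  -(K / 2) * ((∫ φ in (0:ℝ)..(2 * Real.pi), Real.sin φ * h (θ - φ) (-ω₀)) +
    (∫ φ in (0:ℝ)..(2 * Real.pi), Real.sin φ * h (θ - φ) ω₀))

/-- The linearized evolution operator `L` around the stationary density `q`. -/
def Lop (K ω₀ r : ℝ) (h : ℝ → ℝ → ℝ) (θ ω : ℝ) : ℝ :=
  (1 / 2) * deriv (deriv (fun u => h u ω)) θ -
    deriv (fun u => h u ω * (Jconv K ω₀ (q K r) u + ω) + q K r u ω * Jconv K ω₀ h u) θ

section Aux

lemma contG (ω x : ℝ) : Continuous fun u : ℝ => G u ω x := by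
  unfold G; fun_prop

lemma contDiffG (ω x : ℝ) : ContDiff ℝ (⊤ : ℕ∞) fun u : ℝ => G u ω x := by
  unfold G
  exact (contDiff_const.mul Real.contDiff_cos).add (contDiff_const.mul contDiff_id)

lemma hasDerivAt_G (ω x θ : ℝ) :
    HasDerivAt (fun u : ℝ => G u ω x) (-(x * Real.sin θ) + 2 * ω) θ := by
  unfold G
  have h1 : HasDerivAt (fun u : ℝ => x * Real.cos u) (x * (-Real.sin θ)) θ :=
    (Real.hasDerivAt_cos θ).const_mul x
  have h2 : HasDerivAt (fun u : ℝ => 2 * ω * u) (2 * ω) θ := by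
    simpa using (hasDerivAt_id θ).const_mul (2 * ω)
  refine (h1.add h2).congr_deriv (Eq.symm ?_); ring

lemma hasDerivAt_primitive {f : ℝ → ℝ} (hf : Continuous f) (a θ : ℝ) :
    HasDerivAt (fun t => ∫ u in a..t, f u) (f θ) θ :=
  intervalIntegral.integral_hasDerivAt_right (hf.intervalIntegrable _ _)
    (hf.stronglyMeasurableAtFilter _ _) hf.continuousAt

lemma contDiff_primitive {f : ℝ → ℝ} (hf : ContDiff ℝ (⊤ : ℕ∞) f) (a : ℝ) :
    ContDiff ℝ (⊤ : ℕ∞) (fun t => ∫ u in a..t, f u) := by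
  rw [contDiff_infty_iff_deriv]
  have hd : deriv (fun t => ∫ u in a..t, f u) = f := by
    funext θ; exact (hasDerivAt_primitive hf.continuous a θ).deriv
  refine ⟨fun θ => (hasDerivAt_primitive hf.continuous a θ).differentiableAt, ?_⟩
  rw [hd]; exact hf

lemma G_per (ω x u : ℝ) : G (u + 2 * Real.pi) ω x = G u ω x + 4 * Real.pi * ω := by
  unfold G; rw [Real.cos_add_two_pi]; ring

lemma G_neg (ω x u : ℝ) : G (-u) (-ω) x = G u ω x := by
  unfold G; rw [Real.cos_neg]; ring

end Aux
section Aux2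

lemma contExpNegG (ω x : ℝ) : Continuous fun u : ℝ => Real.exp (-(G u ω x)) :=
  Real.continuous_exp.comp (contG ω x).neg

/-- Master formula: `S θ = ∫_{θ-2π}^θ e^{G θ - G w} dw`. -/
lemma S_eq (θ ω x : ℝ) :
    S θ ω x = ∫ w in (θ - 2 * Real.pi)..θ, Real.exp (G θ ω x - G w ω x) := by
  have hc := contExpNegG ω x
  have h1 : ∀ a b : ℝ, IntervalIntegrable (fun u => Real.exp (-(G u ω x))) volume a b :=
    fun a b => hc.intervalIntegrable a b
  have key : (∫ w in (θ - 2 * Real.pi)..(0:ℝ), Real.exp (-(G w ω x)))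
      = Real.exp (4 * Real.pi * ω) * ∫ w in θ..(2 * Real.pi), Real.exp (-(G w ω x)) := by
    have h2 := intervalIntegral.integral_comp_sub_right (a := θ) (b := 2 * Real.pi)
      (fun w => Real.exp (-(G w ω x))) (2 * Real.pi)
    have h3 : (∫ w in θ..(2 * Real.pi), Real.exp (-(G (w - 2 * Real.pi) ω x)))
        = ∫ w in θ..(2 * Real.pi), Real.exp (4 * Real.pi * ω) * Real.exp (-(G w ω x)) := by
      congr 1; funext w
      rw [← Real.exp_add]; congr 1
      unfold G; rw [Real.cos_sub_two_pi]; ring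
    rw [h3, intervalIntegral.integral_const_mul] at h2
    rw [show θ - 2 * Real.pi = θ - 2 * Real.pi by rfl,
      show (2:ℝ) * Real.pi - 2 * Real.pi = 0 by ring] at h2
    exact h2.symm
  have hsplit : (∫ w in (0:ℝ)..θ, Real.exp (-(G w ω x)))
      + (∫ w in θ..(2*Real.pi), Real.exp (-(G w ω x)))
      = ∫ w in (0:ℝ)..(2*Real.pi), Real.exp (-(G w ω x)) :=
    intervalIntegral.integral_add_adjacent_intervals (h1 0 θ) (h1 θ _)
  have hsplit2 : (∫ w in (θ - 2*Real.pi)..(0:ℝ), Real.exp (-(G w ω x)))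
      + (∫ w in (0:ℝ)..θ, Real.exp (-(G w ω x)))
      = ∫ w in (θ - 2*Real.pi)..θ, Real.exp (-(G w ω x)) :=
    intervalIntegral.integral_add_adjacent_intervals (h1 _ 0) (h1 0 θ)
  have hrhs : (∫ w in (θ - 2 * Real.pi)..θ, Real.exp (G θ ω x - G w ω x))
      = Real.exp (G θ ω x) * ∫ w in (θ - 2*Real.pi)..θ, Real.exp (-(G w ω x)) := by
    rw [← intervalIntegral.integral_const_mul]
    congr 1; funext w; rw [← Real.exp_add, sub_eq_add_neg]
  rw [hrhs, ← hsplit2, key]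
  unfold S
  have h4 : (∫ w in θ..(2*Real.pi), Real.exp (-(G w ω x)))
      = (∫ w in (0:ℝ)..(2*Real.pi), Real.exp (-(G w ω x)))
        - ∫ w in (0:ℝ)..θ, Real.exp (-(G w ω x)) := by linarith [hsplit]
  rw [h4]; ring

lemma S_pos (θ ω x : ℝ) : 0 < S θ ω x := by
  rw [S_eq]
  apply intervalIntegral.intervalIntegral_pos_of_pos_on
  · exact (Real.continuous_exp.comp ((continuous_const.sub (contG ω x)))).intervalIntegrable _ _
  · intro u _; positivity
  · have := Real.pi_pos; linarith

lemma S_periodic (ω x : ℝ) : Function.Periodic (fun θ => S θ ω x) (2 * Real.pi) := by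
  intro θ
  simp only
  rw [S_eq, S_eq]
  have h3 : (∫ w in (θ - 2*Real.pi)..θ, Real.exp (G (θ + 2*Real.pi) ω x - G (w + 2*Real.pi) ω x))
      = ∫ w in (θ - 2*Real.pi)..θ, Real.exp (G θ ω x - G w ω x) :=
    intervalIntegral.integral_congr (fun w _ => by rw [G_per, G_per]; ring_nf)
  have h2 := intervalIntegral.integral_comp_add_right (a := θ - 2*Real.pi) (b := θ)
    (fun w => Real.exp (G (θ + 2*Real.pi) ω x - G w ω x)) (2 * Real.pi)
  rw [h3] at h2
  rw [show θ - 2*Real.pi + 2*Real.pi = θ by ring] at h2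
  rw [show θ + 2*Real.pi - 2*Real.pi = θ by ring]
  exact h2.symm

lemma S_symm (θ ω x : ℝ) :
    S (-θ) (-ω) x = Real.exp (-(4 * Real.pi * ω)) * S θ ω x := by
  rw [S_eq, S_eq]
  have h1 := intervalIntegral.integral_comp_neg (a := θ) (b := θ + 2*Real.pi)
    (fun w => Real.exp (G (-θ) (-ω) x - G w (-ω) x))
  have h2 : (∫ w in θ..(θ + 2*Real.pi), Real.exp (G (-θ) (-ω) x - G (-w) (-ω) x))
      = ∫ w in θ..(θ + 2*Real.pi), Real.exp (G θ ω x - G w ω x) :=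
    intervalIntegral.integral_congr (fun w _ => by rw [G_neg, G_neg])
  rw [h2] at h1
  have h4 := intervalIntegral.integral_comp_add_right (a := θ - 2*Real.pi) (b := θ)
    (fun w => Real.exp (G θ ω x - G w ω x)) (2 * Real.pi)
  have h5 : (∫ w in (θ - 2*Real.pi)..θ, Real.exp (G θ ω x - G (w + 2*Real.pi) ω x))
      = ∫ w in (θ - 2*Real.pi)..θ, Real.exp (-(4 * Real.pi * ω)) * Real.exp (G θ ω x - G w ω x) :=
    intervalIntegral.integral_congr (fun w _ => by
      rw [← Real.exp_add, G_per]; ring_nf)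
  rw [h5, intervalIntegral.integral_const_mul] at h4
  rw [show θ - 2*Real.pi + 2*Real.pi = θ by ring] at h4
  rw [show -θ - 2*Real.pi = -(θ + 2*Real.pi) by ring, ← h1, ← h4]

lemma hasDerivAt_S (ω x θ : ℝ) :
    HasDerivAt (fun t => S t ω x)
      ((-(x * Real.sin θ) + 2 * ω) * S θ ω x + (1 - Real.exp (4 * Real.pi * ω))) θ := by
  have hG := hasDerivAt_G ω x θ
  have hexp : HasDerivAt (fun t => Real.exp (G t ω x))
      (Real.exp (G θ ω x) * (-(x * Real.sin θ) + 2 * ω)) θ := by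
    simpa [mul_comm, Function.comp_def] using (Real.hasDerivAt_exp (G θ ω x)).comp θ hG
  have hI : HasDerivAt (fun t => ∫ u in (0:ℝ)..t, Real.exp (-(G u ω x)))
      (Real.exp (-(G θ ω x))) θ := hasDerivAt_primitive (contExpNegG ω x) 0 θ
  have hin : HasDerivAt (fun t => (1 - Real.exp (4 * Real.pi * ω)) *
        (∫ u in (0:ℝ)..t, Real.exp (-(G u ω x))) +
        Real.exp (4 * Real.pi * ω) * (∫ u in (0:ℝ)..(2*Real.pi), Real.exp (-(G u ω x))))
      ((1 - Real.exp (4 * Real.pi * ω)) * Real.exp (-(G θ ω x))) θ :=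
    ((hI.const_mul _).add_const _)
  have := hexp.mul hin
  refine this.congr_deriv (Eq.symm ?_)
  unfold S
  have hone : Real.exp (G θ ω x) * Real.exp (-(G θ ω x)) = 1 := by
    rw [← Real.exp_add]; simp
  linear_combination (Real.exp (4*Real.pi*ω) - 1) * hone

lemma contDiff_S (ω x : ℝ) : ContDiff ℝ (⊤ : ℕ∞) (fun θ => S θ ω x) := by
  unfold S
  exact (Real.contDiff_exp.comp (contDiffG ω x)).mul
    ((contDiff_const.mul (contDiff_primitive (Real.contDiff_exp.comp (contDiffG ω x).neg) 0)).add
      contDiff_const)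

lemma Z_pos (ω x : ℝ) : 0 < Z ω x := by
  unfold Z
  apply intervalIntegral.intervalIntegral_pos_of_pos_on
  · exact (contDiff_S ω x).continuous.intervalIntegrable _ _
  · intro u _; exact S_pos u ω x
  · have := Real.pi_pos; linarith

lemma Z_ne (ω x : ℝ) : Z ω x ≠ 0 := (Z_pos ω x).ne'

end Aux2
section Aux3

/-- Integral of a `2π`-periodic function over a period window is shift invariant. -/
lemma shift_per {f : ℝ → ℝ} (hf : Function.Periodic f (2*Real.pi)) (t : ℝ) :
    (∫ u in t..(t + 2*Real.pi), f u) = ∫ u in (0:ℝ)..(2*Real.pi), f u := by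
  have h2 := hf.intervalIntegral_add_eq t 0
  rw [show (0:ℝ) + 2*Real.pi = 2*Real.pi by ring] at h2
  exact h2

lemma flip_per {f : ℝ → ℝ} (hf : Function.Periodic f (2*Real.pi)) :
    (∫ u in (0:ℝ)..(2*Real.pi), f (-u)) = ∫ u in (0:ℝ)..(2*Real.pi), f u := by
  have h1 := intervalIntegral.integral_comp_neg (a := (0:ℝ)) (b := 2*Real.pi) f
  simp only [neg_zero] at h1
  rw [h1]
  have h2 := hf.intervalIntegral_add_eq (-(2*Real.pi)) 0
  rw [show -(2*Real.pi) + 2*Real.pi = 0 by ring,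
    show (0:ℝ) + 2*Real.pi = 2*Real.pi by ring] at h2
  exact h2

lemma Z_negω (ω x : ℝ) : Z (-ω) x = Real.exp (-(4*Real.pi*ω)) * Z ω x := by
  unfold Z
  have h1 : (∫ θ in (0:ℝ)..(2*Real.pi), S θ (-ω) x)
      = ∫ θ in (0:ℝ)..(2*Real.pi), Real.exp (-(4*Real.pi*ω)) * S (-θ) ω x :=
    intervalIntegral.integral_congr (fun u _ => by
      have := S_symm (-u) ω x; rw [neg_neg] at this; exact this)
  have h2 := flip_per (S_periodic ω x)
  rw [h1, intervalIntegral.integral_const_mul, h2]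

lemma q_periodic (K r ω : ℝ) : Function.Periodic (fun θ => q K r θ ω) (2*Real.pi) := by
  intro θ; simp only; unfold q
  rw [show S (θ + 2*Real.pi) ω (2*K*r) = S θ ω (2*K*r) from S_periodic ω (2*K*r) θ]

lemma q_symm (K r θ ω : ℝ) : q K r (-θ) (-ω) = q K r θ ω := by
  unfold q
  rw [S_symm, Z_negω]
  rw [mul_div_mul_left _ _ (Real.exp_ne_zero _)]

lemma contDiff_q (K r ω : ℝ) : ContDiff ℝ (⊤ : ℕ∞) (fun θ => q K r θ ω) := by
  unfold q
  exact (contDiff_S ω (2*K*r)).div_const _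

lemma continuous_q (K r ω : ℝ) : Continuous (fun θ => q K r θ ω) :=
  (contDiff_q K r ω).continuous

lemma q_pos (K r θ ω : ℝ) : 0 < q K r θ ω :=
  div_pos (S_pos θ ω _) (Z_pos ω _)

lemma hasDerivAt_q (K r ω θ : ℝ) :
    HasDerivAt (fun t => q K r t ω)
      ((-(2*K*r * Real.sin θ) + 2*ω) * q K r θ ω + 2 * kap K r ω) θ := by
  have h := (hasDerivAt_S ω (2*K*r) θ).div_const (Z ω (2*K*r))
  refine h.congr_deriv (Eq.symm ?_)
  unfold q kap
  have hZ := Z_ne ω (2*K*r)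
  field_simp

/-- First Fourier cosine coefficient sum. -/
lemma Cc_sum (K r ω₀ : ℝ) (hfix : r = psiMu ω₀ (2*K*r)) :
    (∫ u in (0:ℝ)..(2*Real.pi), Real.cos u * q K r u (-ω₀))
      + (∫ u in (0:ℝ)..(2*Real.pi), Real.cos u * q K r u ω₀) = 2*r := by
  have e : ∀ ω : ℝ, (∫ u in (0:ℝ)..(2*Real.pi), Real.cos u * q K r u ω)
      = (∫ u in (0:ℝ)..(2*Real.pi), Real.cos u * S u ω (2*K*r)) / Z ω (2*K*r) := by
    intro ω
    rw [← intervalIntegral.integral_div]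
    exact intervalIntegral.integral_congr (fun u _ => by unfold q; rw [mul_div_assoc])
  rw [e, e]
  unfold psiMu at hfix
  linarith

lemma Ssin_negω (K r ω : ℝ) :
    (∫ u in (0:ℝ)..(2*Real.pi), Real.sin u * q K r u (-ω))
      = -∫ u in (0:ℝ)..(2*Real.pi), Real.sin u * q K r u ω := by
  have h1 : (∫ u in (0:ℝ)..(2*Real.pi), Real.sin u * q K r u (-ω))
      = ∫ u in (0:ℝ)..(2*Real.pi), (fun v => -(Real.sin v * q K r v ω)) (-u) :=
    intervalIntegral.integral_congr (fun u _ => by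
      simp only [Real.sin_neg]
      have hq : q K r u (-ω) = q K r (-u) ω := by
        have := q_symm K r (-u) ω; rw [neg_neg] at this; exact this
      rw [hq]; ring)
  rw [h1, flip_per (f := fun v => -(Real.sin v * q K r v ω))]
  · rw [intervalIntegral.integral_neg]
  · intro u; simp only
    have hper := q_periodic K r ω u
    simp only at hper
    rw [Real.sin_add_two_pi, hper]

/-- Expansion of the convolution with `sin` into first Fourier modes. -/
lemma conv_expand {h : ℝ → ℝ} (hc : Continuous h) (hp : Function.Periodic h (2*Real.pi)) (θ : ℝ) :
    (∫ φ in (0:ℝ)..(2*Real.pi), Real.sin φ * h (θ - φ))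
      = Real.sin θ * (∫ u in (0:ℝ)..(2*Real.pi), Real.cos u * h u)
        - Real.cos θ * ∫ u in (0:ℝ)..(2*Real.pi), Real.sin u * h u := by
  have h1 := intervalIntegral.integral_comp_sub_left (a := (0:ℝ)) (b := 2*Real.pi)
    (fun u => Real.sin (θ - u) * h u) θ
  have h2 : (∫ φ in (0:ℝ)..(2*Real.pi), Real.sin (θ - (θ - φ)) * h (θ - φ))
      = ∫ φ in (0:ℝ)..(2*Real.pi), Real.sin φ * h (θ - φ) :=
    intervalIntegral.integral_congr (fun φ _ => by rw [show θ - (θ - φ) = φ by ring])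
  rw [h2] at h1
  rw [h1]
  have h3 : (∫ u in (θ - 2*Real.pi)..(θ - 0), Real.sin (θ - u) * h u)
      = ∫ u in (θ - 2*Real.pi)..((θ - 2*Real.pi) + 2*Real.pi),
          (Real.sin θ * (Real.cos u * h u) - Real.cos θ * (Real.sin u * h u)) := by
    rw [show θ - 2*Real.pi + 2*Real.pi = θ - 0 by ring]
    exact intervalIntegral.integral_congr (fun u _ => by rw [Real.sin_sub]; ring)
  rw [h3]
  have hper : Function.Periodic (fun u => Real.sin θ * (Real.cos u * h u)
      - Real.cos θ * (Real.sin u * h u)) (2*Real.pi) := by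
    intro u; simp only
    rw [Real.cos_add_two_pi, Real.sin_add_two_pi, hp u]
  rw [shift_per hper]
  rw [intervalIntegral.integral_sub (f := fun u => Real.sin θ * (Real.cos u * h u))
    (g := fun u => Real.cos θ * (Real.sin u * h u))
    ((continuous_const.mul (Real.continuous_cos.mul hc)).intervalIntegrable _ _)
    ((continuous_const.mul (Real.continuous_sin.mul hc)).intervalIntegrable _ _),
    intervalIntegral.integral_const_mul, intervalIntegral.integral_const_mul]

lemma Jconv_q (K r ω₀ u : ℝ) (hfix : r = psiMu ω₀ (2*K*r)) :
    Jconv K ω₀ (q K r) u = -(K*r) * Real.sin u := by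
  unfold Jconv
  rw [conv_expand (continuous_q K r (-ω₀)) (q_periodic K r (-ω₀)) u,
    conv_expand (continuous_q K r ω₀) (q_periodic K r ω₀) u]
  have hCc := Cc_sum K r ω₀ hfix
  have hS := Ssin_negω K r ω₀
  linear_combination (-(K/2) * Real.sin u) * hCc + (K/2 * Real.cos u) * hS

end Aux3
section Aux4

attribute [fun_prop] contG

/-- Strict positivity of an interval integral of a nonnegative continuous function
that is positive at an interior point. -/
lemma int_pos_of_nonneg {f : ℝ → ℝ} {a b c : ℝ} (hf : Continuous f) (h0 : ∀ u, 0 ≤ f u)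
    (hc : c ∈ Set.Ioo a b) (hpos : 0 < f c) : 0 < ∫ u in a..b, f u := by
  rw [intervalIntegral.integral_pos_iff_support_of_nonneg_ae
    (Filter.Eventually.of_forall h0) (hf.intervalIntegrable a b)]
  refine ⟨hc.1.trans hc.2, ?_⟩
  obtain ⟨δ, hδpos, hsub⟩ : ∃ δ > 0, Metric.ball c δ ⊆ {u | 0 < f u} :=
    Metric.isOpen_iff.mp (isOpen_lt continuous_const hf) c hpos
  set δ' := min δ (min (c - a) (b - c)) with hδ'
  have hδ'pos : 0 < δ' := lt_min hδpos (lt_min (by linarith [hc.1]) (by linarith [hc.2]))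
  have hsub2 : Set.Ioo (c - δ') (c + δ') ⊆ Function.support f ∩ Set.Ioc a b := by
    intro u hu
    have h1 : |u - c| < δ' := by
      rw [abs_lt]; constructor <;> [linarith [hu.1]; linarith [hu.2]]
    have hδa : δ' ≤ c - a := le_trans (min_le_right _ _) (min_le_left _ _)
    have hδb : δ' ≤ b - c := le_trans (min_le_right _ _) (min_le_right _ _)
    refine ⟨?_, ?_, ?_⟩
    · have : u ∈ Metric.ball c δ := by
        rw [Metric.mem_ball, Real.dist_eq]
        exact lt_of_lt_of_le h1 (min_le_left _ _)
      exact ne_of_gt (hsub this)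
    · rcases abs_lt.mp h1 with ⟨h2, _⟩; linarith
    · rcases abs_lt.mp h1 with ⟨_, h3⟩; linarith
  calc (0:ENNReal) < MeasureTheory.volume (Set.Ioo (c - δ') (c + δ')) := by
        rw [Real.volume_Ioo]
        apply ENNReal.ofReal_pos.mpr; linarith
    _ ≤ MeasureTheory.volume (Function.support f ∩ Set.Ioc a b) := measure_mono hsub2

/-- The elementary lower bound integrand. -/
lemma ptwise_lb (ω x θ w : ℝ) :
    Real.exp (2*ω*(θ-w)) * (1 + x*Real.cos θ - x*Real.cos w) ≤ Real.exp (G θ ω x - G w ω x) := by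
  have hG : G θ ω x - G w ω x = 2*ω*(θ-w) + (x*Real.cos θ - x*Real.cos w) := by
    unfold G; ring
  rw [hG, Real.exp_add]
  have h := Real.add_one_le_exp (x*Real.cos θ - x*Real.cos w)
  nlinarith [Real.exp_pos (2*ω*(θ-w))]

/-- The lower bound profile. -/
def lb (ω x θ : ℝ) : ℝ :=
  ∫ w in (θ - 2*Real.pi)..θ, Real.exp (2*ω*(θ-w)) * (1 + x*Real.cos θ - x*Real.cos w)

lemma continuous_lb_integrand (ω x θ : ℝ) :
    Continuous (fun w => Real.exp (2*ω*(θ-w)) * (1 + x*Real.cos θ - x*Real.cos w)) := by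
  fun_prop

lemma lb_antideriv (ω x θ : ℝ) (hω : ω ≠ 0) (w : ℝ) :
    HasDerivAt (fun w => -(1 + x*Real.cos θ)/(2*ω) * Real.exp (2*ω*(θ-w))
        - x * (Real.exp (2*ω*(θ-w)) * (-2*ω/(1+4*ω^2) * Real.cos w + 1/(1+4*ω^2) * Real.sin w)))
      (Real.exp (2*ω*(θ-w)) * (1 + x*Real.cos θ - x*Real.cos w)) w := by
  have hin : HasDerivAt (fun w : ℝ => 2*ω*(θ-w)) (-(2*ω)) w := by
    have h0 : (fun w : ℝ => 2*ω*(θ-w)) = fun w : ℝ => 2*ω*θ - 2*ω*w := by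
      funext u; ring
    rw [h0]
    simpa using ((hasDerivAt_id w).const_mul (2*ω)).const_sub (2*ω*θ)
  have hexp : HasDerivAt (fun w : ℝ => Real.exp (2*ω*(θ-w)))
      (Real.exp (2*ω*(θ-w)) * (-(2*ω))) w := (Real.hasDerivAt_exp _).comp w hin
  have htrig : HasDerivAt (fun w : ℝ => -2*ω/(1+4*ω^2) * Real.cos w + 1/(1+4*ω^2) * Real.sin w)
      (-2*ω/(1+4*ω^2) * (-Real.sin w) + 1/(1+4*ω^2) * Real.cos w) w :=
    ((Real.hasDerivAt_cos w).const_mul _).add ((Real.hasDerivAt_sin w).const_mul _)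
  have h1 := (hexp.const_mul (-(1 + x*Real.cos θ)/(2*ω))).sub ((hexp.mul htrig).const_mul x)
  refine h1.congr_deriv (Eq.symm ?_)
  have h4 : (1:ℝ) + 4*ω^2 ≠ 0 := by positivity
  field_simp
  ring

lemma lb_closed (ω x θ : ℝ) (hω : ω ≠ 0) :
    lb ω x θ = (Real.exp (4*Real.pi*ω) - 1)/(2*ω)
      + ((Real.exp (4*Real.pi*ω) - 1)/(2*ω) * x + x*(Real.exp (4*Real.pi*ω) - 1)*(-2*ω/(1+4*ω^2))) * Real.cos θ
      + (x*(Real.exp (4*Real.pi*ω) - 1)*(1/(1+4*ω^2))) * Real.sin θ := by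
  unfold lb
  rw [intervalIntegral.integral_eq_sub_of_hasDerivAt (fun w _ => lb_antideriv ω x θ hω w)
    ((continuous_lb_integrand ω x θ).intervalIntegrable _ _)]
  rw [show 2*ω*(θ-θ) = 0 by ring, show 2*ω*(θ-(θ-2*Real.pi)) = 4*Real.pi*ω by ring]
  rw [Real.cos_sub_two_pi, Real.sin_sub_two_pi, Real.exp_zero]
  have h4 : (1:ℝ) + 4*ω^2 ≠ 0 := by positivity
  field_simp
  ring

lemma continuous_lb (ω x : ℝ) (hω : ω ≠ 0) : Continuous (fun θ => lb ω x θ) := by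
  have : (fun θ => lb ω x θ) = fun θ => (Real.exp (4*Real.pi*ω) - 1)/(2*ω)
      + ((Real.exp (4*Real.pi*ω) - 1)/(2*ω) * x + x*(Real.exp (4*Real.pi*ω) - 1)*(-2*ω/(1+4*ω^2))) * Real.cos θ
      + (x*(Real.exp (4*Real.pi*ω) - 1)*(1/(1+4*ω^2))) * Real.sin θ :=
    funext (fun θ => lb_closed ω x θ hω)
  rw [this]; fun_prop

lemma lb_integral (ω x : ℝ) (hω : ω ≠ 0) :
    (∫ θ in (0:ℝ)..(2*Real.pi), lb ω x θ) = Real.pi * (Real.exp (4*Real.pi*ω) - 1)/ω := by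
  have h1 : (∫ θ in (0:ℝ)..(2*Real.pi), lb ω x θ)
      = ∫ θ in (0:ℝ)..(2*Real.pi), ((Real.exp (4*Real.pi*ω) - 1)/(2*ω)
      + ((Real.exp (4*Real.pi*ω) - 1)/(2*ω) * x + x*(Real.exp (4*Real.pi*ω) - 1)*(-2*ω/(1+4*ω^2))) * Real.cos θ
      + (x*(Real.exp (4*Real.pi*ω) - 1)*(1/(1+4*ω^2))) * Real.sin θ) :=
    intervalIntegral.integral_congr (fun θ _ => lb_closed ω x θ hω)
  rw [h1]
  rw [intervalIntegral.integral_add (f := fun θ => _ + _ * Real.cos θ) (g := fun θ => _ * Real.sin θ)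
      (((continuous_const.add (continuous_const.mul Real.continuous_cos))).intervalIntegrable _ _)
      ((continuous_const.mul Real.continuous_sin).intervalIntegrable _ _),
    intervalIntegral.integral_add (f := fun _ => _) (g := fun θ => _ * Real.cos θ)
      (continuous_const.intervalIntegrable _ _)
      ((continuous_const.mul Real.continuous_cos).intervalIntegrable _ _),
    intervalIntegral.integral_const, intervalIntegral.integral_const_mul,
    intervalIntegral.integral_const_mul, integral_cos, integral_sin]
  rw [Real.sin_two_pi, Real.cos_two_pi, Real.sin_zero, Real.cos_zero]
  rw [smul_eq_mul]
  field_simp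
  ring

lemma S_ge_lb (ω x θ : ℝ) : lb ω x θ ≤ S θ ω x := by
  rw [S_eq]
  unfold lb
  apply intervalIntegral.integral_mono_on (by have := Real.pi_pos; linarith)
    ((continuous_lb_integrand ω x θ).intervalIntegrable _ _)
    ((Real.continuous_exp.comp (by fun_prop)).intervalIntegrable _ _)
  intro w _
  exact ptwise_lb ω x θ w

lemma S_sub_lb_pos (ω x : ℝ) (hω : ω ≠ 0) (hx : 0 < x) :
    0 < S Real.pi ω x - lb ω x Real.pi := by
  rw [S_eq]
  unfold lb
  have hc1 : Continuous fun w => Real.exp (G Real.pi ω x - G w ω x) := by fun_prop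
  rw [← intervalIntegral.integral_sub (hc1.intervalIntegrable _ _)
    ((continuous_lb_integrand ω x Real.pi).intervalIntegrable _ _)]
  have hpi := Real.pi_pos
  apply int_pos_of_nonneg (f := fun w => Real.exp (G Real.pi ω x - G w ω x)
    - Real.exp (2*ω*(Real.pi-w)) * (1 + x*Real.cos Real.pi - x*Real.cos w)) (c := 0)
  · exact hc1.sub (continuous_lb_integrand ω x Real.pi)
  · intro u; have := ptwise_lb ω x Real.pi u; linarith
  · constructor <;> linarith
  · have hG : G Real.pi ω x - G 0 ω x = 2*ω*(Real.pi - 0) + (-2*x) := by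
      unfold G; rw [Real.cos_pi, Real.cos_zero]; ring
    simp only [hG]
    rw [Real.exp_add, Real.cos_pi, Real.cos_zero]
    have h2 : (-2*x) + 1 < Real.exp (-2*x) := Real.add_one_lt_exp (by linarith)
    have h3 := Real.exp_pos (2*ω*(Real.pi - 0))
    nlinarith

lemma Z_lb (ω x : ℝ) (hω : 0 < ω) (hx : 0 < x) :
    Real.pi * (Real.exp (4*Real.pi*ω) - 1)/ω < Z ω x := by
  have key : 0 < ∫ θ in (0:ℝ)..(2*Real.pi), (S θ ω x - lb ω x θ) := by
    have hpi := Real.pi_pos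
    apply int_pos_of_nonneg (c := Real.pi)
    · exact (contDiff_S ω x).continuous.sub (continuous_lb ω x hω.ne')
    · intro u; have := S_ge_lb ω x u; linarith
    · constructor <;> linarith
    · exact S_sub_lb_pos ω x hω.ne' hx
  rw [intervalIntegral.integral_sub ((contDiff_S ω x).continuous.intervalIntegrable _ _)
    ((continuous_lb ω x hω.ne').intervalIntegrable _ _)] at key
  rw [lb_integral ω x hω.ne'] at key
  unfold Z
  linarith

/-- Integrated stationarity identity for the sine coefficient of `S`. -/
lemma sigma_formula (ω x : ℝ) :
    x * (∫ u in (0:ℝ)..(2*Real.pi), Real.sin u * S u ω x)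
      = 2*ω*Z ω x + 2*Real.pi*(1 - Real.exp (4*Real.pi*ω)) := by
  have hcS := (contDiff_S ω x).continuous
  have hd : ∀ u ∈ Set.uIcc (0:ℝ) (2*Real.pi), HasDerivAt (fun t => S t ω x)
      ((-(x * Real.sin u) + 2*ω) * S u ω x + (1 - Real.exp (4*Real.pi*ω))) u :=
    fun u _ => hasDerivAt_S ω x u
  have continuous_sin_comb : Continuous fun u : ℝ => -(x * Real.sin u) + 2*ω := by fun_prop
  have hcont : Continuous (fun u => (-(x * Real.sin u) + 2*ω) * S u ω x
      + (1 - Real.exp (4*Real.pi*ω))) := (continuous_sin_comb.mul hcS).add continuous_const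
  have hint := intervalIntegral.integral_eq_sub_of_hasDerivAt hd (hcont.intervalIntegrable _ _)
  have hper : S (2*Real.pi) ω x = S 0 ω x := by
    have := S_periodic ω x 0; simp only [zero_add] at this; exact this
  rw [hper, sub_self] at hint
  have e1 : (∫ u in (0:ℝ)..(2*Real.pi), ((-(x * Real.sin u) + 2*ω) * S u ω x
        + (1 - Real.exp (4*Real.pi*ω))))
      = (∫ u in (0:ℝ)..(2*Real.pi), ((-(x * Real.sin u) + 2*ω) * S u ω x))
        + ∫ u in (0:ℝ)..(2*Real.pi), (1 - Real.exp (4*Real.pi*ω)) :=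
    intervalIntegral.integral_add (((continuous_sin_comb.mul hcS).intervalIntegrable _ _)) (continuous_const.intervalIntegrable _ _)
  have e2 : (∫ u in (0:ℝ)..(2*Real.pi), ((-(x * Real.sin u) + 2*ω) * S u ω x))
      = (∫ u in (0:ℝ)..(2*Real.pi), ((-x) * (Real.sin u * S u ω x) + (2*ω) * S u ω x)) :=
    intervalIntegral.integral_congr (fun u _ => by ring)
  have e3 : (∫ u in (0:ℝ)..(2*Real.pi), ((-x) * (Real.sin u * S u ω x) + (2*ω) * S u ω x))
      = (∫ u in (0:ℝ)..(2*Real.pi), (-x) * (Real.sin u * S u ω x))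
        + ∫ u in (0:ℝ)..(2*Real.pi), (2*ω) * S u ω x :=
    intervalIntegral.integral_add
      ((continuous_const.mul (Real.continuous_sin.mul hcS)).intervalIntegrable _ _)
      ((continuous_const.mul hcS).intervalIntegrable _ _)
  rw [e1, e2, e3, intervalIntegral.integral_const_mul, intervalIntegral.integral_const_mul,
    intervalIntegral.integral_const, smul_eq_mul] at hint
  unfold Z
  linarith

lemma sigma_pos (ω x : ℝ) (hω : 0 < ω) (hx : 0 < x) :
    0 < ∫ u in (0:ℝ)..(2*Real.pi), Real.sin u * S u ω x := by
  have h1 := sigma_formula ω x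
  have h2 := Z_lb ω x hω hx
  rw [div_lt_iff₀ hω] at h2
  by_contra hcon
  push_neg at hcon
  nlinarith

end Aux4
section Aux5

attribute [fun_prop] continuous_q

/-- Particular solution: `(1/2)P0' - (1/2)G' P0 = q`. -/
def P0 (K r θ ω : ℝ) : ℝ :=
  1 / (1 - Real.exp (4*Real.pi*ω)) * Real.exp (G θ ω (2*K*r)) *
    ((∫ w in (0:ℝ)..θ, Real.exp (-(G w ω (2*K*r))) * (2 * q K r w ω))
      - ∫ w in (0:ℝ)..(θ - 2*Real.pi), Real.exp (-(G w ω (2*K*r))) * (2 * q K r w ω))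

/-- Homogeneous-with-constant solution: `(1/2)U' - (1/2)G' U = 1`. -/
def U (K r θ ω : ℝ) : ℝ := 2 / (1 - Real.exp (4*Real.pi*ω)) * S θ ω (2*K*r)

lemma continuous_P0_integrand (K r ω : ℝ) :
    Continuous fun w => Real.exp (-(G w ω (2*K*r))) * (2 * q K r w ω) := by fun_prop

lemma P0_master (K r θ ω : ℝ) :
    P0 K r θ ω = 1 / (1 - Real.exp (4*Real.pi*ω)) *
      ∫ w in (θ - 2*Real.pi)..θ, Real.exp (G θ ω (2*K*r) - G w ω (2*K*r)) * (2 * q K r w ω) := by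
  have hc := continuous_P0_integrand K r ω
  have hsplit : (∫ w in (0:ℝ)..(θ - 2*Real.pi), Real.exp (-(G w ω (2*K*r))) * (2 * q K r w ω))
      + (∫ w in (θ - 2*Real.pi)..θ, Real.exp (-(G w ω (2*K*r))) * (2 * q K r w ω))
      = ∫ w in (0:ℝ)..θ, Real.exp (-(G w ω (2*K*r))) * (2 * q K r w ω) :=
    intervalIntegral.integral_add_adjacent_intervals (hc.intervalIntegrable _ _)
      (hc.intervalIntegrable _ _)
  have hpull : (∫ w in (θ - 2*Real.pi)..θ,
        Real.exp (G θ ω (2*K*r) - G w ω (2*K*r)) * (2 * q K r w ω))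
      = Real.exp (G θ ω (2*K*r)) * ∫ w in (θ - 2*Real.pi)..θ,
          Real.exp (-(G w ω (2*K*r))) * (2 * q K r w ω) := by
    rw [← intervalIntegral.integral_const_mul]
    exact intervalIntegral.integral_congr (fun w _ => by
      rw [show G θ ω (2*K*r) - G w ω (2*K*r) = G θ ω (2*K*r) + -(G w ω (2*K*r)) by ring,
        Real.exp_add]; ring)
  unfold P0
  rw [hpull, ← hsplit]
  ring

lemma P0_periodic (K r ω : ℝ) : Function.Periodic (fun θ => P0 K r θ ω) (2*Real.pi) := by
  intro θ; simp only
  rw [P0_master, P0_master]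
  have h3 : (∫ w in (θ - 2*Real.pi)..θ,
        Real.exp (G (θ + 2*Real.pi) ω (2*K*r) - G (w + 2*Real.pi) ω (2*K*r))
          * (2 * q K r (w + 2*Real.pi) ω))
      = ∫ w in (θ - 2*Real.pi)..θ, Real.exp (G θ ω (2*K*r) - G w ω (2*K*r)) * (2 * q K r w ω) :=
    intervalIntegral.integral_congr (fun w _ => by
      have hq := q_periodic K r ω w; simp only at hq
      rw [G_per, G_per, hq]; ring_nf)
  have h2 := intervalIntegral.integral_comp_add_right (a := θ - 2*Real.pi) (b := θ)
    (fun w => Real.exp (G (θ + 2*Real.pi) ω (2*K*r) - G w ω (2*K*r)) * (2 * q K r w ω))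
    (2*Real.pi)
  rw [h3] at h2
  rw [show θ - 2*Real.pi + 2*Real.pi = θ by ring] at h2
  rw [show θ + 2*Real.pi - 2*Real.pi = θ by ring, ← h2]

lemma exp_4pi_ne_one (ω : ℝ) (hω : ω ≠ 0) : Real.exp (4*Real.pi*ω) ≠ 1 := by
  rw [Ne, Real.exp_eq_one_iff]
  have := Real.pi_pos
  intro h
  have : ω = 0 := by
    by_contra h2
    rcases lt_or_gt_of_ne h2 with h3 | h3 <;> nlinarith
  exact hω this

lemma one_sub_exp_ne (ω : ℝ) (hω : ω ≠ 0) : 1 - Real.exp (4*Real.pi*ω) ≠ 0 :=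
  sub_ne_zero.mpr (Ne.symm (exp_4pi_ne_one ω hω))

lemma coef_neg (c E M : ℝ) (hE : E ≠ 0) (h1 : 1 - E ≠ 0) (h1' : 1 - E⁻¹ ≠ 0) :
    c / (1 - E⁻¹) * (E⁻¹ * M) = -(c / (1 - E) * M) := by
  have h2 : -E + E^2 ≠ 0 := by
    intro h
    have h3 : E * (E - 1) = 0 := by nlinarith [h]
    rcases mul_eq_zero.mp h3 with h4 | h4
    · exact hE h4
    · exact h1 (by linarith)
  have h3 : (1:ℝ) - E⁻¹ = (E - 1) / E := by field_simp
  have h4 : E - 1 ≠ 0 := fun h => h1 (by linarith)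
  rw [h3]
  field_simp
  ring

lemma P0_symm (K r θ ω : ℝ) (hω : ω ≠ 0) : P0 K r (-θ) (-ω) = -(P0 K r θ ω) := by
  rw [P0_master, P0_master]
  have h1 := intervalIntegral.integral_comp_neg (a := θ) (b := θ + 2*Real.pi)
    (fun w => Real.exp (G (-θ) (-ω) (2*K*r) - G w (-ω) (2*K*r)) * (2 * q K r w (-ω)))
  have h2 : (∫ w in θ..(θ + 2*Real.pi),
        Real.exp (G (-θ) (-ω) (2*K*r) - G (-w) (-ω) (2*K*r)) * (2 * q K r (-w) (-ω)))
      = ∫ w in θ..(θ + 2*Real.pi),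
          Real.exp (G θ ω (2*K*r) - G w ω (2*K*r)) * (2 * q K r w ω) :=
    intervalIntegral.integral_congr (fun w _ => by rw [G_neg, G_neg, q_symm])
  rw [h2] at h1
  have h4 := intervalIntegral.integral_comp_add_right (a := θ - 2*Real.pi) (b := θ)
    (fun w => Real.exp (G θ ω (2*K*r) - G w ω (2*K*r)) * (2 * q K r w ω)) (2*Real.pi)
  have h5 : (∫ w in (θ - 2*Real.pi)..θ,
        Real.exp (G θ ω (2*K*r) - G (w + 2*Real.pi) ω (2*K*r)) * (2 * q K r (w + 2*Real.pi) ω))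
      = ∫ w in (θ - 2*Real.pi)..θ, Real.exp (-(4*Real.pi*ω)) *
          (Real.exp (G θ ω (2*K*r) - G w ω (2*K*r)) * (2 * q K r w ω)) :=
    intervalIntegral.integral_congr (fun w _ => by
      have hq := q_periodic K r ω w; simp only at hq
      rw [G_per, hq,
        show G θ ω (2*K*r) - (G w ω (2*K*r) + 4*Real.pi*ω)
          = -(4*Real.pi*ω) + (G θ ω (2*K*r) - G w ω (2*K*r)) by ring, Real.exp_add]
      ring)
  rw [h5, intervalIntegral.integral_const_mul] at h4
  rw [show θ - 2*Real.pi + 2*Real.pi = θ by ring] at h4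
  rw [show -θ - 2*Real.pi = -(θ + 2*Real.pi) by ring, ← h1, ← h4]
  rw [show 4*Real.pi*(-ω) = -(4*Real.pi*ω) by ring]
  have hE := Real.exp_ne_zero (4*Real.pi*ω)
  have h6 := one_sub_exp_ne ω hω
  have h7 : 1 - Real.exp (-(4*Real.pi*ω)) ≠ 0 := by
    rw [Real.exp_neg]
    intro hcon
    apply exp_4pi_ne_one ω hω
    have : Real.exp (4*Real.pi*ω) * (1 - (Real.exp (4*Real.pi*ω))⁻¹) = 0 := by rw [hcon]; ring
    rw [mul_sub, mul_inv_cancel₀ hE] at this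
    nlinarith [this]
  rw [Real.exp_neg]
  rw [Real.exp_neg] at h7
  exact coef_neg 1 _ _ hE h6 h7

lemma contDiff_P0 (K r ω : ℝ) : ContDiff ℝ (⊤ : ℕ∞) (fun θ => P0 K r θ ω) := by
  unfold P0
  have hg : ContDiff ℝ (⊤ : ℕ∞) (fun w => Real.exp (-(G w ω (2*K*r))) * (2 * q K r w ω)) :=
    (Real.contDiff_exp.comp (contDiffG ω (2*K*r)).neg).mul (contDiff_const.mul (contDiff_q K r ω))
  exact (contDiff_const.mul (Real.contDiff_exp.comp (contDiffG ω (2*K*r)))).mul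
    ((contDiff_primitive hg 0).sub ((contDiff_primitive hg 0).comp
      (contDiff_id.sub contDiff_const)))

lemma continuous_P0 (K r ω : ℝ) : Continuous (fun θ => P0 K r θ ω) :=
  (contDiff_P0 K r ω).continuous

lemma hasDerivAt_P0 (K r ω θ : ℝ) (hω : ω ≠ 0) :
    HasDerivAt (fun t => P0 K r t ω)
      ((-(2*K*r*Real.sin θ) + 2*ω) * P0 K r θ ω + 2 * q K r θ ω) θ := by
  have hg : Continuous (fun w => Real.exp (-(G w ω (2*K*r))) * (2 * q K r w ω)) :=
    continuous_P0_integrand K r ω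
  have hF : HasDerivAt (fun t => ∫ w in (0:ℝ)..t, Real.exp (-(G w ω (2*K*r))) * (2 * q K r w ω))
      (Real.exp (-(G θ ω (2*K*r))) * (2 * q K r θ ω)) θ := hasDerivAt_primitive hg 0 θ
  have hF2 : HasDerivAt (fun t => ∫ w in (0:ℝ)..(t - 2*Real.pi),
        Real.exp (-(G w ω (2*K*r))) * (2 * q K r w ω))
      (Real.exp (-(G (θ - 2*Real.pi) ω (2*K*r))) * (2 * q K r (θ - 2*Real.pi) ω)) θ := by
    have := (hasDerivAt_primitive hg 0 (θ - 2*Real.pi)).comp θ ((hasDerivAt_id θ).sub_const (2*Real.pi))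
    simpa [Function.comp_def] using this
  have hexp : HasDerivAt (fun t => Real.exp (G t ω (2*K*r)))
      (Real.exp (G θ ω (2*K*r)) * (-(2*K*r * Real.sin θ) + 2*ω)) θ := by
    simpa [mul_comm, Function.comp_def] using (Real.hasDerivAt_exp _).comp θ (hasDerivAt_G ω (2*K*r) θ)
  have h := (hexp.const_mul (1 / (1 - Real.exp (4*Real.pi*ω)))).mul (hF.sub hF2)
  have heq : (fun t => P0 K r t ω) = fun t =>
      1 / (1 - Real.exp (4*Real.pi*ω)) * Real.exp (G t ω (2*K*r)) *
        ((∫ w in (0:ℝ)..t, Real.exp (-(G w ω (2*K*r))) * (2 * q K r w ω))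
          - ∫ w in (0:ℝ)..(t - 2*Real.pi), Real.exp (-(G w ω (2*K*r))) * (2 * q K r w ω)) := rfl
  rw [heq]
  refine h.congr_deriv (Eq.symm ?_)
  have hGm : G (θ - 2*Real.pi) ω (2*K*r) = G θ ω (2*K*r) - 4*Real.pi*ω := by
    have := G_per ω (2*K*r) (θ - 2*Real.pi)
    rw [show θ - 2*Real.pi + 2*Real.pi = θ by ring] at this
    linarith
  have hqm : q K r (θ - 2*Real.pi) ω = q K r θ ω := by
    have := q_periodic K r ω (θ - 2*Real.pi); simp only at this
    rw [show θ - 2*Real.pi + 2*Real.pi = θ by ring] at this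
    exact this.symm
  rw [hGm, hqm]
  have hone : Real.exp (G θ ω (2*K*r)) * Real.exp (-(G θ ω (2*K*r))) = 1 := by
    rw [← Real.exp_add]; simp
  have hE2 : Real.exp (G θ ω (2*K*r)) * Real.exp (-(G θ ω (2*K*r) - 4*Real.pi*ω))
      = Real.exp (4*Real.pi*ω) := by
    rw [← Real.exp_add]; congr 1; ring
  have h6 := one_sub_exp_ne ω hω
  have hc : 1 / (1 - Real.exp (4*Real.pi*ω)) * (1 - Real.exp (4*Real.pi*ω)) = 1 := by
    field_simp
  simp only [P0, Pi.sub_apply]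
  linear_combination (-(1/(1 - Real.exp (4*Real.pi*ω))) * (2 * q K r θ ω)) * hone
    + ((1/(1 - Real.exp (4*Real.pi*ω))) * (2 * q K r θ ω)) * hE2
    + (-(2 * q K r θ ω)) * hc

lemma U_periodic (K r ω : ℝ) : Function.Periodic (fun θ => U K r θ ω) (2*Real.pi) := by
  intro θ; simp only; unfold U
  rw [show S (θ + 2*Real.pi) ω (2*K*r) = S θ ω (2*K*r) from S_periodic ω (2*K*r) θ]

lemma U_symm (K r θ ω : ℝ) (hω : ω ≠ 0) : U K r (-θ) (-ω) = -(U K r θ ω) := by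
  unfold U
  rw [S_symm, show 4*Real.pi*(-ω) = -(4*Real.pi*ω) by ring]
  have hE := Real.exp_ne_zero (4*Real.pi*ω)
  have h6 := one_sub_exp_ne ω hω
  have h7 : 1 - (Real.exp (4*Real.pi*ω))⁻¹ ≠ 0 := by
    intro hcon
    apply exp_4pi_ne_one ω hω
    have : Real.exp (4*Real.pi*ω) * (1 - (Real.exp (4*Real.pi*ω))⁻¹) = 0 := by rw [hcon]; ring
    rw [mul_sub, mul_inv_cancel₀ hE] at this
    nlinarith [this]
  rw [Real.exp_neg]
  exact coef_neg 2 _ _ hE h6 h7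

lemma contDiff_U (K r ω : ℝ) : ContDiff ℝ (⊤ : ℕ∞) (fun θ => U K r θ ω) := by
  unfold U
  exact contDiff_const.mul (contDiff_S ω (2*K*r))

lemma continuous_U (K r ω : ℝ) : Continuous (fun θ => U K r θ ω) :=
  (contDiff_U K r ω).continuous

lemma hasDerivAt_U (K r ω θ : ℝ) (hω : ω ≠ 0) :
    HasDerivAt (fun t => U K r t ω)
      ((-(2*K*r*Real.sin θ) + 2*ω) * U K r θ ω + 2) θ := by
  have h := (hasDerivAt_S ω (2*K*r) θ).const_mul (2 / (1 - Real.exp (4*Real.pi*ω)))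
  have heq : (fun t => U K r t ω) = fun t =>
      2 / (1 - Real.exp (4*Real.pi*ω)) * S t ω (2*K*r) := rfl
  rw [heq]
  refine h.congr_deriv (Eq.symm ?_)
  have h6 := one_sub_exp_ne ω hω
  unfold U
  have h7 : 2 / (1 - Real.exp (4*Real.pi*ω)) * (1 - Real.exp (4*Real.pi*ω)) = 2 := div_mul_cancel₀ 2 h6
  linear_combination (-1:ℝ) * h7

end Aux5
section Aux6

/-- Constants for the self-consistency correction. -/
def AA (K r ω₀ : ℝ) : ℝ :=
  (∫ u in (0:ℝ)..(2*Real.pi), Real.sin u * P0 K r u (-ω₀))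
    + ∫ u in (0:ℝ)..(2*Real.pi), Real.sin u * P0 K r u ω₀

def BB (K r ω₀ : ℝ) : ℝ :=
  (∫ u in (0:ℝ)..(2*Real.pi), Real.sin u * U K r u (-ω₀))
    + ∫ u in (0:ℝ)..(2*Real.pi), Real.sin u * U K r u ω₀

def c0 (K r ω₀ : ℝ) : ℝ := -(AA K r ω₀) / BB K r ω₀

/-- The generalized eigenvector. -/
def pJordan (K r ω₀ : ℝ) (θ ω : ℝ) : ℝ := P0 K r θ ω + c0 K r ω₀ * U K r θ ω

lemma sinS_negω (ω x : ℝ) :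
    (∫ u in (0:ℝ)..(2*Real.pi), Real.sin u * S u (-ω) x)
      = -(Real.exp (-(4*Real.pi*ω)) * ∫ u in (0:ℝ)..(2*Real.pi), Real.sin u * S u ω x) := by
  have h1 : (∫ u in (0:ℝ)..(2*Real.pi), Real.sin u * S u (-ω) x)
      = ∫ u in (0:ℝ)..(2*Real.pi),
          Real.exp (-(4*Real.pi*ω)) * ((fun v => -(Real.sin v * S v ω x)) (-u)) :=
    intervalIntegral.integral_congr (fun u _ => by
      have hs := S_symm (-u) ω x; rw [neg_neg] at hs
      simp only [Real.sin_neg, hs]; ring)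
  rw [h1, intervalIntegral.integral_const_mul,
    flip_per (f := fun v => -(Real.sin v * S v ω x)) (by
      intro u; simp only
      rw [Real.sin_add_two_pi, show S (u + 2*Real.pi) ω x = S u ω x from S_periodic ω x u]),
    intervalIntegral.integral_neg]
  ring

lemma BB_eq (K r ω₀ : ℝ) (hω₀ : ω₀ ≠ 0) :
    BB K r ω₀ = 4 / (1 - Real.exp (4*Real.pi*ω₀))
      * ∫ u in (0:ℝ)..(2*Real.pi), Real.sin u * S u ω₀ (2*K*r) := by
  unfold BB U
  have e1 : (∫ u in (0:ℝ)..(2*Real.pi), Real.sin u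
        * (2 / (1 - Real.exp (4*Real.pi*(-ω₀))) * S u (-ω₀) (2*K*r)))
      = 2 / (1 - Real.exp (-(4*Real.pi*ω₀)))
        * ∫ u in (0:ℝ)..(2*Real.pi), Real.sin u * S u (-ω₀) (2*K*r) := by
    rw [← intervalIntegral.integral_const_mul]
    exact intervalIntegral.integral_congr (fun u _ => by
      rw [show 4*Real.pi*(-ω₀) = -(4*Real.pi*ω₀) by ring]; ring)
  have e2 : (∫ u in (0:ℝ)..(2*Real.pi), Real.sin u
        * (2 / (1 - Real.exp (4*Real.pi*ω₀)) * S u ω₀ (2*K*r)))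
      = 2 / (1 - Real.exp (4*Real.pi*ω₀))
        * ∫ u in (0:ℝ)..(2*Real.pi), Real.sin u * S u ω₀ (2*K*r) := by
    rw [← intervalIntegral.integral_const_mul]
    exact intervalIntegral.integral_congr (fun u _ => by ring)
  rw [e1, e2, sinS_negω]
  have hE := Real.exp_ne_zero (4*Real.pi*ω₀)
  have h6 := one_sub_exp_ne ω₀ hω₀
  have h7 : 1 - (Real.exp (4*Real.pi*ω₀))⁻¹ ≠ 0 := by
    intro hcon
    apply exp_4pi_ne_one ω₀ hω₀
    have : Real.exp (4*Real.pi*ω₀) * (1 - (Real.exp (4*Real.pi*ω₀))⁻¹) = 0 := by rw [hcon]; ring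
    rw [mul_sub, mul_inv_cancel₀ hE] at this
    nlinarith [this]
  rw [Real.exp_neg]
  have hcoef := coef_neg 2 (Real.exp (4*Real.pi*ω₀))
    (∫ u in (0:ℝ)..(2*Real.pi), Real.sin u * S u ω₀ (2*K*r)) hE h6 h7
  linear_combination (-1 : ℝ) * hcoef

lemma BB_neg (K r ω₀ : ℝ) (hK : 0 < K) (hr : 0 < r) (hω₀ : 0 < ω₀) : BB K r ω₀ < 0 := by
  rw [BB_eq K r ω₀ hω₀.ne']
  have hσ := sigma_pos ω₀ (2*K*r) hω₀ (by positivity)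
  have hE : 1 < Real.exp (4*Real.pi*ω₀) := by
    rw [← Real.exp_zero]
    apply Real.exp_lt_exp.mpr
    have := Real.pi_pos; positivity
  apply mul_neg_of_neg_of_pos _ hσ
  apply div_neg_of_pos_of_neg (by norm_num)
  linarith

lemma BB_ne (K r ω₀ : ℝ) (hK : 0 < K) (hr : 0 < r) (hω₀ : 0 < ω₀) : BB K r ω₀ ≠ 0 :=
  (BB_neg K r ω₀ hK hr hω₀).ne

lemma pJordan_periodic (K r ω₀ ω : ℝ) :
    Function.Periodic (fun θ => pJordan K r ω₀ θ ω) (2*Real.pi) := by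
  intro θ
  have h1 := P0_periodic K r ω θ; simp only at h1
  have h2 := U_periodic K r ω θ; simp only at h2
  simp only [pJordan, h1, h2]

lemma contDiff_pJordan (K r ω₀ ω : ℝ) :
    ContDiff ℝ (⊤ : ℕ∞) (fun θ => pJordan K r ω₀ θ ω) := by
  unfold pJordan
  exact (contDiff_P0 K r ω).add (contDiff_const.mul (contDiff_U K r ω))

lemma continuous_pJordan (K r ω₀ ω : ℝ) : Continuous (fun θ => pJordan K r ω₀ θ ω) :=
  (contDiff_pJordan K r ω₀ ω).continuous

lemma pJordan_symm (K r ω₀ θ ω : ℝ) (hω : ω ≠ 0) :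
    pJordan K r ω₀ (-θ) (-ω) = -(pJordan K r ω₀ θ ω) := by
  unfold pJordan
  rw [P0_symm K r θ ω hω, U_symm K r θ ω hω]
  ring

lemma hasDerivAt_pJordan (K r ω₀ ω θ : ℝ) (hω : ω ≠ 0) :
    HasDerivAt (fun t => pJordan K r ω₀ t ω)
      ((-(2*K*r*Real.sin θ) + 2*ω) * pJordan K r ω₀ θ ω + 2 * q K r θ ω + 2 * c0 K r ω₀) θ := by
  have h := (hasDerivAt_P0 K r ω θ hω).add ((hasDerivAt_U K r ω θ hω).const_mul (c0 K r ω₀))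
  have heq : (fun t => pJordan K r ω₀ t ω)
      = fun t => P0 K r t ω + c0 K r ω₀ * U K r t ω := rfl
  rw [heq]
  refine h.congr_deriv (Eq.symm ?_)
  unfold pJordan
  ring

/-- The sine Fourier coefficients of `pJordan` sum to zero (choice of `c0`). -/
lemma Sp_sum (K r ω₀ : ℝ) (hK : 0 < K) (hr : 0 < r) (hω₀ : 0 < ω₀) :
    (∫ u in (0:ℝ)..(2*Real.pi), Real.sin u * pJordan K r ω₀ u (-ω₀))
      + (∫ u in (0:ℝ)..(2*Real.pi), Real.sin u * pJordan K r ω₀ u ω₀) = 0 := by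
  have split : ∀ ω : ℝ, (∫ u in (0:ℝ)..(2*Real.pi), Real.sin u * pJordan K r ω₀ u ω)
      = (∫ u in (0:ℝ)..(2*Real.pi), Real.sin u * P0 K r u ω)
        + c0 K r ω₀ * ∫ u in (0:ℝ)..(2*Real.pi), Real.sin u * U K r u ω := by
    intro ω
    rw [← intervalIntegral.integral_const_mul, ← intervalIntegral.integral_add
      (f := fun u => Real.sin u * P0 K r u ω) (g := fun u => c0 K r ω₀ * (Real.sin u * U K r u ω))
      ((Real.continuous_sin.mul (continuous_P0 K r ω)).intervalIntegrable _ _)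
      ((continuous_const.mul (Real.continuous_sin.mul (continuous_U K r ω))).intervalIntegrable _ _)]
    exact intervalIntegral.integral_congr (fun u _ => by unfold pJordan; ring)
  rw [split, split]
  have hBB := BB_ne K r ω₀ hK hr hω₀
  have hc0 : c0 K r ω₀ * BB K r ω₀ = -(AA K r ω₀) := by
    unfold c0
    field_simp
  unfold AA BB at hc0
  linarith [hc0]

/-- The cosine Fourier coefficients of `pJordan` sum to zero (oddness). -/
lemma Cp_sum (K r ω₀ : ℝ) (hω₀ : 0 < ω₀) :
    (∫ u in (0:ℝ)..(2*Real.pi), Real.cos u * pJordan K r ω₀ u (-ω₀))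
      + (∫ u in (0:ℝ)..(2*Real.pi), Real.cos u * pJordan K r ω₀ u ω₀) = 0 := by
  have h1 : (∫ u in (0:ℝ)..(2*Real.pi), Real.cos u * pJordan K r ω₀ u (-ω₀))
      = ∫ u in (0:ℝ)..(2*Real.pi), (fun v => -(Real.cos v * pJordan K r ω₀ v ω₀)) (-u) :=
    intervalIntegral.integral_congr (fun u _ => by
      have hs := pJordan_symm K r ω₀ (-u) ω₀ hω₀.ne'
      rw [neg_neg] at hs
      simp only [Real.cos_neg, hs]; ring)
  rw [h1, flip_per (f := fun v => -(Real.cos v * pJordan K r ω₀ v ω₀)) (by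
    intro u; simp only
    have hp := pJordan_periodic K r ω₀ ω₀ u; simp only at hp
    rw [Real.cos_add_two_pi, hp]), intervalIntegral.integral_neg]
  ring

lemma Jconv_pJordan (K r ω₀ : ℝ) (hK : 0 < K) (hr : 0 < r) (hω₀ : 0 < ω₀) (u : ℝ) :
    Jconv K ω₀ (pJordan K r ω₀) u = 0 := by
  unfold Jconv
  rw [conv_expand (continuous_pJordan K r ω₀ (-ω₀)) (pJordan_periodic K r ω₀ (-ω₀)) u,
    conv_expand (continuous_pJordan K r ω₀ ω₀) (pJordan_periodic K r ω₀ ω₀) u]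
  have hC := Cp_sum K r ω₀ hω₀
  have hS := Sp_sum K r ω₀ hK hr hω₀
  linear_combination (-(K/2) * Real.sin u) * hC + (K/2 * Real.cos u) * hS

end Aux6
/-- Existence of a nontrivial Jordan block of `L` at the eigenvalue `0`: there is a
`2π`-periodic, smooth-in-`θ`, odd function `p` solving `Lp = ∂θq`. -/
theorem stmt6 (K ω₀ r : ℝ) (hK : 0 < K) (hω₀ : 0 < ω₀) (hr : 0 < r)
    (hfix : r = psiMu ω₀ (2 * K * r)) :
    ∃ p : ℝ → ℝ → ℝ,
      (∀ ω ∈ ({-ω₀, ω₀} : Set ℝ),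
        Function.Periodic (fun θ => p θ ω) (2 * Real.pi) ∧
          ContDiff ℝ (⊤ : ℕ∞) (fun θ => p θ ω)) ∧
      (∀ θ : ℝ, ∀ ω ∈ ({-ω₀, ω₀} : Set ℝ), p (-θ) (-ω) = -p θ ω) ∧
      ∀ θ : ℝ, ∀ ω ∈ ({-ω₀, ω₀} : Set ℝ),
        Lop K ω₀ r p θ ω = deriv (fun u => q K r u ω) θ := by
  refine ⟨pJordan K r ω₀, ?_, ?_, ?_⟩
  · intro ω _
    exact ⟨pJordan_periodic K r ω₀ ω, contDiff_pJordan K r ω₀ ω⟩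
  · intro θ ω hω
    have hωne : ω ≠ 0 := by
      simp only [Set.mem_insert_iff, Set.mem_singleton_iff] at hω
      rcases hω with h | h
      · subst h; exact neg_ne_zero.mpr hω₀.ne'
      · subst h; exact hω₀.ne'
    exact pJordan_symm K r ω₀ θ ω hωne
  · intro θ ω hω
    have hωne : ω ≠ 0 := by
      simp only [Set.mem_insert_iff, Set.mem_singleton_iff] at hω
      rcases hω with h | h
      · subst h; exact neg_ne_zero.mpr hω₀.ne'
      · subst h; exact hω₀.ne'
    have hqd := hasDerivAt_q K r ω θ
    have hderiv : deriv (fun t => pJordan K r ω₀ t ω)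
        = fun u => (-(2*K*r*Real.sin u) + 2*ω) * pJordan K r ω₀ u ω
            + 2 * q K r u ω + 2 * c0 K r ω₀ :=
      funext (fun u => (hasDerivAt_pJordan K r ω₀ ω u hωne).deriv)
    have hfun : (fun u => pJordan K r ω₀ u ω * (Jconv K ω₀ (q K r) u + ω)
          + q K r u ω * Jconv K ω₀ (pJordan K r ω₀) u)
        = fun u => (1/2) * ((-(2*K*r*Real.sin u) + 2*ω) * pJordan K r ω₀ u ω
            + 2 * q K r u ω + 2 * c0 K r ω₀) - q K r u ω - c0 K r ω₀ := by
      funext u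
      rw [Jconv_q K r ω₀ u hfix, Jconv_pJordan K r ω₀ hK hr hω₀ u]
      ring
    have hsin : HasDerivAt (fun u : ℝ => -(2*K*r*Real.sin u) + 2*ω)
        (-(2*K*r*Real.cos θ)) θ := by
      simpa using (((Real.hasDerivAt_sin θ).const_mul (2*K*r)).neg.add_const (2*ω))
    have hg1 : HasDerivAt (fun u => (-(2*K*r*Real.sin u) + 2*ω) * pJordan K r ω₀ u ω
          + 2 * q K r u ω + 2 * c0 K r ω₀)
        ((-(2*K*r*Real.cos θ)) * pJordan K r ω₀ θ ω
          + (-(2*K*r*Real.sin θ) + 2*ω) * ((-(2*K*r*Real.sin θ) + 2*ω) * pJordan K r ω₀ θ ω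
              + 2 * q K r θ ω + 2 * c0 K r ω₀)
          + 2 * ((-(2*K*r*Real.sin θ) + 2*ω) * q K r θ ω + 2 * kap K r ω)) θ :=
      ((hsin.mul (hasDerivAt_pJordan K r ω₀ ω θ hωne)).add (hqd.const_mul 2)).add_const _
    have hg2 : HasDerivAt (fun u => (1/2) * ((-(2*K*r*Real.sin u) + 2*ω) * pJordan K r ω₀ u ω
            + 2 * q K r u ω + 2 * c0 K r ω₀) - q K r u ω - c0 K r ω₀)
        ((1/2) * ((-(2*K*r*Real.cos θ)) * pJordan K r ω₀ θ ω
          + (-(2*K*r*Real.sin θ) + 2*ω) * ((-(2*K*r*Real.sin θ) + 2*ω) * pJordan K r ω₀ θ ω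
              + 2 * q K r θ ω + 2 * c0 K r ω₀)
          + 2 * ((-(2*K*r*Real.sin θ) + 2*ω) * q K r θ ω + 2 * kap K r ω))
          - ((-(2*K*r*Real.sin θ) + 2*ω) * q K r θ ω + 2 * kap K r ω)) θ :=
      ((hg1.const_mul (1/2)).sub hqd).sub_const _
    unfold Lop
    rw [hfun, hderiv, hg1.deriv, hg2.deriv, hqd.deriv]
    ring
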